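/- If ρ is a density operator on a finite dimensional Hilbert space and σ is a positive semidefinite operator with 0 < Tr(σ) ≤ 1 and supp ρ ⊆ supp σ, then the relative von Neumann entropy H(ρ||σ) = Tr(ρ log ρ − ρ log σ) is nonnegative. -/

import Mathlib

open Matrix

/-- The logarithm of a Hermitian matrix, via functional calculus on its support
(using the convention `Real.log 0 = 0`, i.e. `0 log 0 = 0`). For non-Hermitian
input we return the junk value `0`. -/
noncomputable def matLog {n : Type*} [Fintype n] [DecidableEq n] (A : Matrix n n ℝ) :
    Matrix n n ℝ :=
  if hA : A.IsHermitian then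
    (hA.eigenvectorUnitary : Matrix n n ℝ) *
      Matrix.diagonal (fun i => Real.log (hA.eigenvalues i)) *
      (star hA.eigenvectorUnitary : Matrix n n ℝ)
  else 0

/-- The relative von Neumann entropy `H(ρ‖σ) = Tr(ρ log ρ − ρ log σ)`. -/
noncomputable def relEntropy {n : Type*} [Fintype n] [DecidableEq n]
    (ρ σ : Matrix n n ℝ) : ℝ :=
  (ρ * matLog ρ - ρ * matLog σ).trace

/-- trace is invariant under a unitary sandwich. -/
lemma trace_unitary_sandwich {n : Type*} [Fintype n] [DecidableEq n]
    (U X : Matrix n n ℝ) (hU : star U * U = 1) :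
    (U * X * star U).trace = X.trace := by
  rw [Matrix.trace_mul_comm, ← Matrix.mul_assoc, hU, one_mul]

/-- trace of `diagonal p * W * diagonal l * star W` as a double sum. -/
lemma trace_diag_conj {n : Type*} [Fintype n] [DecidableEq n] (p l : n → ℝ)
    (W : Matrix n n ℝ) :
    (Matrix.diagonal p * W * Matrix.diagonal l * star W).trace
      = ∑ i, ∑ j, p i * (W i j ^ 2 * l j) := by
  simp only [Matrix.trace, Matrix.diag, Matrix.mul_apply, Matrix.diagonal_apply,
    Matrix.star_apply, star_trivial, ite_mul, zero_mul, mul_ite, mul_zero,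
    Finset.sum_ite_eq, Finset.sum_ite_eq', Finset.mem_univ, if_true]
  congr 1; ext i; congr 1; ext j; ring

/-- The key trace formula: `Tr(A log B)` as a double sum over eigenvalues. -/
lemma trace_mul_matLog {n : Type*} [Fintype n] [DecidableEq n] {A B : Matrix n n ℝ}
    (hA : A.IsHermitian) (hB : B.IsHermitian) :
    (A * matLog B).trace = ∑ i, ∑ j, hA.eigenvalues i *
      (((star (hA.eigenvectorUnitary : Matrix n n ℝ) *
          (hB.eigenvectorUnitary : Matrix n n ℝ)) i j) ^ 2
        * Real.log (hB.eigenvalues j)) := by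
  set U : Matrix n n ℝ := (hA.eigenvectorUnitary : Matrix n n ℝ) with hUdef
  set V : Matrix n n ℝ := (hB.eigenvectorUnitary : Matrix n n ℝ) with hVdef
  set W : Matrix n n ℝ := star U * V with hWdef
  have hU1 : star U * U = 1 := Unitary.coe_star_mul_self hA.eigenvectorUnitary
  have hU2 : U * star U = 1 := Unitary.coe_mul_star_self hA.eigenvectorUnitary
  have hWs : star W = star V * U := by rw [hWdef, StarMul.star_mul, star_star]
  have hA' : A = U * Matrix.diagonal hA.eigenvalues * star U := by
    have h := hA.spectral_theorem
    simpa [RCLike.ofReal_real_eq_id, Function.comp] using h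
  have hlogB : matLog B = V * Matrix.diagonal (fun i => Real.log (hB.eigenvalues i)) * star V := by
    rw [matLog, dif_pos hB]
  have key : A * matLog B = U * (Matrix.diagonal hA.eigenvalues * W *
      Matrix.diagonal (fun i => Real.log (hB.eigenvalues i)) * star W) * star U := by
    conv_lhs => rw [hA', hlogB]
    rw [hWdef, StarMul.star_mul, star_star]
    simp only [Matrix.mul_assoc]
    rw [hU2]
    simp only [Matrix.mul_one]
  rw [key, trace_unitary_sandwich _ _ hU1, trace_diag_conj]

/-- if ρ is a density operator and σ is positive semidefinite with
0 < Tr σ ≤ 1 and supp ρ ⊆ supp σ (equivalently, ker σ ⊆ ker ρ), then the relative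
von Neumann entropy H(ρ‖σ) is nonnegative. -/
theorem relEntropy_nonneg {n : Type*} [Fintype n] [DecidableEq n]
    (ρ σ : Matrix n n ℝ) (hρ : ρ.PosSemidef) (hρtr : ρ.trace = 1)
    (hσ : σ.PosSemidef) (hσtr0 : 0 < σ.trace) (hσtr1 : σ.trace ≤ 1)
    (hsupp : ∀ v : n → ℝ, σ.mulVec v = 0 → ρ.mulVec v = 0) :
    0 ≤ relEntropy ρ σ := by
  classical
  have hH := hρ.1
  have hS := hσ.1
  set p : n → ℝ := hH.eigenvalues with hpdef
  set q : n → ℝ := hS.eigenvalues with hqdef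
  set U : Matrix n n ℝ := (hH.eigenvectorUnitary : Matrix n n ℝ) with hUdef
  set V : Matrix n n ℝ := (hS.eigenvectorUnitary : Matrix n n ℝ) with hVdef
  set W : Matrix n n ℝ := star U * V with hWdef
  have hU1 : star U * U = 1 := Unitary.coe_star_mul_self hH.eigenvectorUnitary
  have hU2 : U * star U = 1 := Unitary.coe_mul_star_self hH.eigenvectorUnitary
  have hV1 : star V * V = 1 := Unitary.coe_star_mul_self hS.eigenvectorUnitary
  have hV2 : V * star V = 1 := Unitary.coe_mul_star_self hS.eigenvectorUnitary
  have hWs : star W = star V * U := by rw [hWdef, StarMul.star_mul, star_star]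
  have hρ' : ρ = U * Matrix.diagonal p * star U := by
    have h := hH.spectral_theorem
    simpa [RCLike.ofReal_real_eq_id, Function.comp] using h
  have hσ' : σ = V * Matrix.diagonal q * star V := by
    have h := hS.spectral_theorem
    simpa [RCLike.ofReal_real_eq_id, Function.comp] using h
  -- row sums of W² are 1
  have hWW : W * star W = 1 := by
    rw [hWdef, hWs, Matrix.mul_assoc, ← Matrix.mul_assoc V, hV2, Matrix.one_mul, hU1]
  have hWW' : star W * W = 1 := by
    rw [hWdef, hWs, Matrix.mul_assoc, ← Matrix.mul_assoc U, hU2, Matrix.one_mul, hV1]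
  have hrow : ∀ i, ∑ j, W i j ^ 2 = 1 := by
    intro i
    have := congrFun (congrFun hWW i) i
    simp only [Matrix.mul_apply, Matrix.star_apply, star_trivial, Matrix.one_apply_eq] at this
    rw [← this]
    exact Finset.sum_congr rfl fun j _ => (sq (W i j)).symm ▸ rfl
  have hcol : ∀ j, ∑ i, W i j ^ 2 = 1 := by
    intro j
    have := congrFun (congrFun hWW' j) j
    simp only [Matrix.mul_apply, Matrix.star_apply, star_trivial, Matrix.one_apply_eq] at this
    rw [← this]
    exact Finset.sum_congr rfl fun i _ => by ring
  -- eigenvalue nonnegativity and sums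
  have hpnn : ∀ i, 0 ≤ p i := fun i => hρ.eigenvalues_nonneg i
  have hqnn : ∀ j, 0 ≤ q j := fun j => hσ.eigenvalues_nonneg j
  have hsum_p : ∑ i, p i = 1 := by
    have : ρ.trace = (Matrix.diagonal p).trace := by
      conv_lhs => rw [hρ']
      exact trace_unitary_sandwich _ _ hU1
    rw [hρtr, Matrix.trace_diagonal] at this
    exact this.symm
  have hsum_q : ∑ j, q j = σ.trace := by
    have : σ.trace = (Matrix.diagonal q).trace := by
      conv_lhs => rw [hσ']
      exact trace_unitary_sandwich _ _ hV1
    rw [Matrix.trace_diagonal] at this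
    exact this.symm
  -- support condition: q j = 0 → p i * W i j = 0
  have hker : ∀ i j, q j = 0 → p i * W i j = 0 := by
    intro i j hqj
    set v : n → ℝ := fun k => V k j with hvdef
    have hσv : σ.mulVec v = 0 := by
      funext k
      have h1 : σ.mulVec v k = (σ * V) k j := by
        simp [Matrix.mulVec, Matrix.mul_apply, dotProduct, hvdef]
      have h2 : σ * V = V * Matrix.diagonal q := by
        rw [hσ']
        simp only [Matrix.mul_assoc]
        rw [hV1]
        simp only [Matrix.mul_one]
      rw [h1, h2, Matrix.mul_diagonal, hqj]
      simp
    have hρv : ρ.mulVec v = 0 := hsupp v hσv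
    have hcolzero : ∀ k, (ρ * V) k j = 0 := by
      intro k
      have : ρ.mulVec v k = (ρ * V) k j := by
        simp [Matrix.mulVec, Matrix.mul_apply, dotProduct, hvdef]
      rw [← this, hρv]
      rfl
    have h3 : Matrix.diagonal p * W = star U * (ρ * V) := by
      rw [hρ']
      simp only [Matrix.mul_assoc]
      rw [← Matrix.mul_assoc (star U) U, hU1, Matrix.one_mul, hWdef]
    have h4 : (Matrix.diagonal p * W) i j = 0 := by
      rw [h3, Matrix.mul_apply]
      exact Finset.sum_eq_zero fun k _ => by rw [hcolzero k, mul_zero]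
    rwa [Matrix.diagonal_mul] at h4
  -- the two trace formulas
  have hT1 : (ρ * matLog ρ).trace = ∑ i, p i * Real.log (p i) := by
    rw [trace_mul_matLog hH hH]
    have hUU : star U * U = 1 := hU1
    calc ∑ i, ∑ j, p i * (((star U * U) i j) ^ 2 * Real.log (p j))
        = ∑ i, ∑ j, p i * (((1 : Matrix n n ℝ) i j) ^ 2 * Real.log (p j)) := by rw [hUU]
      _ = ∑ i, p i * Real.log (p i) := by
          refine Finset.sum_congr rfl fun i _ => ?_
          rw [Finset.sum_eq_single i]
          · simp [Matrix.one_apply_eq]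
          · intro j _ hji
            simp [Matrix.one_apply_ne (Ne.symm hji)]
          · intro h; exact absurd (Finset.mem_univ i) h
  have hT2 : (ρ * matLog σ).trace = ∑ i, ∑ j, p i * (W i j ^ 2 * Real.log (q j)) :=
    trace_mul_matLog hH hS
  -- set up per-row quantities
  set r : n → ℝ := fun i => ∑ j, W i j ^ 2 * q j with hrdef
  have hrnn : ∀ i, 0 ≤ r i :=
    fun i => Finset.sum_nonneg fun j _ => mul_nonneg (sq_nonneg _) (hqnn j)
  have hsum_r : ∑ i, r i = σ.trace := by
    rw [hrdef, ← hsum_q, Finset.sum_comm]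
    refine Finset.sum_congr rfl fun j _ => ?_
    rw [← Finset.sum_mul, hcol j, one_mul]
  -- per-row inequality
  set s : n → ℝ := fun i => if p i = 0 then 0 else r i with hsdef
  have hkey : ∀ i, p i - s i ≤
      p i * Real.log (p i) - ∑ j, p i * (W i j ^ 2 * Real.log (q j)) := by
    intro i
    by_cases hpi : p i = 0
    · simp [hsdef, hpi]
    · have hpi' : 0 < p i := lt_of_le_of_ne (hpnn i) (Ne.symm hpi)
      have hW0 : ∀ j, q j = 0 → W i j = 0 := by
        intro j hqj
        have := hker i j hqj
        exact (mul_eq_zero.mp this).resolve_left hpi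
      have hri : 0 < r i := by
        rcases lt_or_eq_of_le (hrnn i) with h | h
        · exact h
        · exfalso
          have hz : ∀ j ∈ Finset.univ, W i j ^ 2 * q j = 0 := by
            intro j _
            have := (Finset.sum_eq_zero_iff_of_nonneg
              (fun j _ => mul_nonneg (sq_nonneg (W i j)) (hqnn j))).mp h.symm
            exact this j (Finset.mem_univ j)
          have hWz : ∀ j, W i j = 0 := by
            intro j
            rcases mul_eq_zero.mp (hz j (Finset.mem_univ j)) with h1 | h1
            · exact sq_eq_zero_iff.mp h1
            · exact hW0 j h1
          have : (1 : ℝ) = 0 := by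
            rw [← hrow i]
            exact Finset.sum_eq_zero fun j _ => by rw [hWz j]; ring
          norm_num at this
      -- Jensen-type step: ∑ⱼ wⱼ log qⱼ ≤ log rᵢ
      have hjensen : ∑ j, W i j ^ 2 * Real.log (q j) ≤ Real.log (r i) := by
        have hterm : ∀ j, W i j ^ 2 * Real.log (q j) ≤
            W i j ^ 2 * (Real.log (r i) + q j / r i - 1) := by
          intro j
          by_cases hqj : q j = 0
          · rw [hW0 j hqj]; simp
          · have hqj' : 0 < q j := lt_of_le_of_ne (hqnn j) (Ne.symm hqj)
            refine mul_le_mul_of_nonneg_left ?_ (sq_nonneg _)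
            have h1 : Real.log (q j / r i) ≤ q j / r i - 1 :=
              Real.log_le_sub_one_of_pos (div_pos hqj' hri)
            rw [Real.log_div (ne_of_gt hqj') (ne_of_gt hri)] at h1
            linarith
        calc ∑ j, W i j ^ 2 * Real.log (q j)
            ≤ ∑ j, W i j ^ 2 * (Real.log (r i) + q j / r i - 1) :=
              Finset.sum_le_sum fun j _ => hterm j
          _ = (∑ j, W i j ^ 2) * (Real.log (r i) - 1) + (∑ j, W i j ^ 2 * q j) / r i := by
              rw [Finset.sum_mul, Finset.sum_div, ← Finset.sum_add_distrib]
              refine Finset.sum_congr rfl fun j _ => ?_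
              ring
          _ = Real.log (r i) := by
              have hrr : ∑ j, W i j ^ 2 * q j = r i := rfl
              rw [hrow i, hrr, one_mul, div_self (ne_of_gt hri)]
              ring
      -- Klein step: pᵢ log pᵢ − pᵢ log rᵢ ≥ pᵢ − rᵢ
      have hklein : p i - r i ≤ p i * Real.log (p i) - p i * Real.log (r i) := by
        have h1 : Real.log (r i / p i) ≤ r i / p i - 1 :=
          Real.log_le_sub_one_of_pos (div_pos hri hpi')
        rw [Real.log_div (ne_of_gt hri) (ne_of_gt hpi')] at h1
        have h2 := mul_le_mul_of_nonneg_left h1 (le_of_lt hpi')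
        rw [mul_sub] at h2
        have h3 : p i * (r i / p i) = r i := by field_simp
        rw [mul_sub, h3, mul_one] at h2
        linarith
      have hsi : s i = r i := by rw [hsdef]; simp [hpi]
      rw [hsi]
      have h5 : ∑ j, p i * (W i j ^ 2 * Real.log (q j))
          = p i * ∑ j, W i j ^ 2 * Real.log (q j) := by
        rw [Finset.mul_sum]
      rw [h5]
      have h6 : p i * ∑ j, W i j ^ 2 * Real.log (q j) ≤ p i * Real.log (r i) :=
        mul_le_mul_of_nonneg_left hjensen (le_of_lt hpi')
      linarith
  -- assemble
  have hsum_s : ∑ i, s i ≤ σ.trace := by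
    rw [← hsum_r]
    refine Finset.sum_le_sum fun i _ => ?_
    rw [hsdef]
    by_cases hpi : p i = 0
    · simp [hpi, hrnn i]
    · simp [hpi]
  have hmain : 1 - σ.trace ≤ (ρ * matLog ρ).trace - (ρ * matLog σ).trace := by
    rw [hT1, hT2, ← Finset.sum_sub_distrib]
    calc 1 - σ.trace ≤ ∑ i, p i - ∑ i, s i := by rw [hsum_p]; linarith
      _ = ∑ i, (p i - s i) := (Finset.sum_sub_distrib _ _).symm
      _ ≤ ∑ i, (p i * Real.log (p i) - ∑ j, p i * (W i j ^ 2 * Real.log (q j))) :=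
          Finset.sum_le_sum fun i _ => hkey i
  rw [relEntropy, Matrix.trace_sub]
  linarith
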